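/- (a) For every Borel probability measure Q on [0, B]: ∫ r·(1 − F₁*(r)) dQ(r) ≤ L. (b) For every compatible CDF F: ∫ r·(1 − F(r)) dQ₁*(r) ≥ L. In other words, in the single-bidder pricing problem, the equal-revenue distribution F₁* caps the seller's expected revenue at L against every pricing distribution, and the log-uniform pricing distribution Q₁* guarantees the seller expected revenue at least L against every compatible value distribution. -/

import Mathlib

open MeasureTheory

/-- Single-bidder max-min pricing (Carrasco et al.): (a) against the equal-revenue
value distribution `F₁*`, every pricing distribution `Q` on `[0, B]` earns expected
revenue at most `L`; (b) the log-uniform pricing distribution `Q₁*` (the measure on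
`[L, B]` with CDF `log(r/L)/log(B/L)`) guarantees expected revenue at least `L`
against every value distribution with mean `μ` and support in `[0, B]`. -/
theorem single_bidder_maxmin (B μ L : ℝ) (hB : 0 < B) (hμ0 : 0 < μ) (hμB : μ < B)
    (hL : L ∈ Set.Ioo (0 : ℝ) B) (hLμ : L * (1 + Real.log (B / L)) = μ)
    (F1 : ℝ → ℝ)
    (hF1 : ∀ v, F1 v = if v < L then 0 else if v < B then 1 - L / v else 1)
    (Q1 : Measure ℝ) [IsProbabilityMeasure Q1]
    (hQ1 : ∀ r, (Q1 (Set.Iic r)).toReal =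
      if r < L then 0 else if r ≤ B then Real.log (r / L) / Real.log (B / L) else 1) :
    (∀ Q : Measure ℝ, IsProbabilityMeasure Q → Q (Set.Icc 0 B) = 1 →
      (∫ r, r * (1 - F1 r) ∂Q) ≤ L) ∧
    (∀ F : ℝ → ℝ, Monotone F → (∀ x, ContinuousWithinAt F (Set.Ici x) x) →
      (∀ v, F v ∈ Set.Icc (0 : ℝ) 1) → (∀ v, v < 0 → F v = 0) → (∀ v, B ≤ v → F v = 1) →
      (∫ v in (0 : ℝ)..B, (1 - F v)) = μ →
      (∫ r, r * (1 - F r) ∂Q1) ≥ L) := by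
  obtain ⟨hL0, hLB⟩ := hL
  set c := Real.log (B / L) with hc
  have hc0 : 0 < c := Real.log_pos (by rw [lt_div_iff₀ hL0]; linarith)
  constructor
  · -- Part (a)
    intro Q hQprob hQsupp
    have hcompl : Q (Set.Icc 0 B)ᶜ = 0 := by
      rw [measure_compl measurableSet_Icc (measure_ne_top _ _), hQsupp, measure_univ]
      simp
    have hae : ∀ᵐ r ∂Q, r * (1 - F1 r) ≤ L := by
      have hmem : ∀ᵐ r ∂Q, r ∈ Set.Icc 0 B := by
        rw [ae_iff]
        exact hcompl
      filter_upwards [hmem] with r hr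
      obtain ⟨hr0, hrB⟩ := hr
      rw [hF1 r]
      by_cases h1 : r < L
      · simp only [if_pos h1]
        linarith
      · push_neg at h1
        by_cases h2 : r < B
        · have hrpos : 0 < r := lt_of_lt_of_le hL0 h1
          rw [if_neg (not_lt.mpr h1), if_pos h2]
          have : r * (1 - (1 - L / r)) = L := by field_simp; ring
          rw [this]
        · rw [if_neg (not_lt.mpr h1), if_neg h2]
          simp [hL0.le]
    by_cases hint : Integrable (fun r => r * (1 - F1 r)) Q
    · calc ∫ r, r * (1 - F1 r) ∂Q ≤ ∫ _, L ∂Q := integral_mono_ae hint (integrable_const L) hae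
        _ = L := by simp
    · rw [integral_undef hint]; exact hL0.le
  · -- Part (b)
    intro F hFmono _hFrc hF01 _hF0 _hFB hFmean
    have hLB' : L ≤ B := hLB.le
    -- the density of Q1
    set d : ℝ → NNReal := fun r => Real.toNNReal ((c * r)⁻¹) with hd
    have hdmeas : Measurable d := (measurable_const.mul measurable_id).inv.real_toNNReal
    set ν : Measure ℝ :=
      (volume.restrict (Set.Ioc L B)).withDensity (fun r => (d r : ENNReal)) with hν
    -- integrability of the density
    have hdens_int : IntegrableOn (fun r => (c * r)⁻¹) (Set.Icc L B) := by
      apply ContinuousOn.integrableOn_Icc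
      apply ContinuousOn.inv₀
      · exact (continuous_const.mul continuous_id).continuousOn
      · intro x hx
        have : 0 < x := lt_of_lt_of_le hL0 hx.1
        positivity
    -- lintegral-to-integral conversion on subsets of Icc L B
    have hlint : ∀ s : Set ℝ, MeasurableSet s → s ⊆ Set.Icc L B →
        (∫⁻ r in s, (d r : ENNReal)) = ENNReal.ofReal (∫ r in s, (c * r)⁻¹) := by
      intro s hs hsub
      have hint : IntegrableOn (fun r => (c * r)⁻¹) s := hdens_int.mono_set hsub
      rw [ofReal_integral_eq_lintegral_ofReal hint]
      · rfl
      · filter_upwards [ae_restrict_mem hs] with r hr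
        have h1 : 0 < r := lt_of_lt_of_le hL0 (hsub hr).1
        positivity
    -- interval integral of the density
    have hival : ∀ a : ℝ, L ≤ a → a ≤ B →
        (∫ r in Set.Ioc L a, (c * r)⁻¹) = Real.log (a / L) / c := by
      intro a ha haB
      rw [← intervalIntegral.integral_of_le ha]
      have : ∀ r : ℝ, (c * r)⁻¹ = c⁻¹ * r⁻¹ := by intro r; rw [mul_inv]
      simp_rw [this]
      rw [intervalIntegral.integral_const_mul, integral_inv]
      · ring
      · rw [Set.uIcc_of_le ha]
        intro h0
        exact absurd h0.1 (not_le.mpr hL0)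
    -- Q1 = ν
    have hQν : Q1 = ν := by
      have hfin : ∀ r : ℝ, Q1 (Set.Iic r) = ENNReal.ofReal ((Q1 (Set.Iic r)).toReal) :=
        fun r => (ENNReal.ofReal_toReal (measure_ne_top _ _)).symm
      refine Measure.ext_of_Iic Q1 ν (fun a => ?_)
      rw [hν, withDensity_apply _ measurableSet_Iic, Measure.restrict_restrict measurableSet_Iic]
      by_cases h1 : a < L
      · have hempty : Set.Iic a ∩ Set.Ioc L B = ∅ := by
          ext x
          simp only [Set.mem_inter_iff, Set.mem_Iic, Set.mem_Ioc, Set.mem_empty_iff_false,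
            iff_false]
          rintro ⟨hx1, hx2, _⟩
          linarith
        rw [hempty, hfin a, hQ1 a, if_pos h1]
        simp
      · push_neg at h1
        by_cases h2 : a ≤ B
        · have hseq : Set.Iic a ∩ Set.Ioc L B = Set.Ioc L a := by
            ext x
            simp only [Set.mem_inter_iff, Set.mem_Iic, Set.mem_Ioc]
            constructor
            · rintro ⟨hx1, hx2, _⟩; exact ⟨hx2, hx1⟩
            · rintro ⟨hx1, hx2⟩; exact ⟨hx2, hx1, hx2.trans h2⟩
          rw [hseq, hlint _ measurableSet_Ioc (Set.Ioc_subset_Icc_self.trans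
            (Set.Icc_subset_Icc_right h2)), hival a h1 h2, hfin a, hQ1 a,
            if_neg (not_lt.mpr h1), if_pos h2]
        · push_neg at h2
          have hseq : Set.Iic a ∩ Set.Ioc L B = Set.Ioc L B := by
            rw [Set.inter_eq_right]
            intro x hx
            exact le_trans hx.2 h2.le
          rw [hseq, hlint _ measurableSet_Ioc Set.Ioc_subset_Icc_self, hival B hLB' le_rfl,
            hfin a, hQ1 a, if_neg (not_lt.mpr h1),
            if_neg (not_le.mpr h2), ← hc, div_self hc0.ne']
    -- rewrite the integral via the density
    rw [hQν, hν, integral_withDensity_eq_integral_smul hdmeas]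
    have hcongr : (∫ r in Set.Ioc L B, d r • (r * (1 - F r))) =
        ∫ r in Set.Ioc L B, c⁻¹ * (1 - F r) := by
      apply setIntegral_congr_fun measurableSet_Ioc
      intro r hr
      have hrpos : 0 < r := lt_trans hL0 hr.1
      have hcr : 0 < c * r := by positivity
      simp only [NNReal.smul_def, smul_eq_mul, hd, Real.coe_toNNReal _ (inv_nonneg.mpr hcr.le)]
      field_simp
    rw [hcongr, integral_const_mul, ← intervalIntegral.integral_of_le hLB']
    -- interval integrability of 1 - F
    have hFint : ∀ a b : ℝ, IntervalIntegrable (fun v => 1 - F v) volume a b := by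
      intro a b
      exact (intervalIntegrable_const (c := (1:ℝ))).sub hFmono.intervalIntegrable
    -- split the mean integral
    have hsplit : (∫ v in (0:ℝ)..L, (1 - F v)) + (∫ v in L..B, (1 - F v)) = μ := by
      rw [intervalIntegral.integral_add_adjacent_intervals (hFint 0 L) (hFint L B)]
      exact hFmean
    have hfirst : (∫ v in (0:ℝ)..L, (1 - F v)) ≤ L := by
      calc (∫ v in (0:ℝ)..L, (1 - F v)) ≤ ∫ _ in (0:ℝ)..L, (1:ℝ) := by
            apply intervalIntegral.integral_mono_on hL0.le (hFint 0 L)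
              intervalIntegrable_const
            intro x _
            have := (hF01 x).1
            linarith
        _ = L := by simp
    have hsecond : L * c ≤ ∫ v in L..B, (1 - F v) := by
      have : μ - L ≤ ∫ v in L..B, (1 - F v) := by linarith
      calc L * c = μ - L := by rw [← hLμ]; ring
        _ ≤ _ := this
    calc (c⁻¹ : ℝ) * ∫ v in L..B, (1 - F v) ≥ c⁻¹ * (L * c) := by
          apply mul_le_mul_of_nonneg_left hsecond (inv_nonneg.mpr hc0.le)
      _ = L := by field_simp
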